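/- Assume the Common Givens: P_i is a preference order on C consistent with Q; the query is the pair (c_j,c_k) with P_i(c_j,c_k); and neither (c_j,c_k) nor (c_k,c_j) belongs to Q. Let P' be a preference order consistent with the transitive closure of Q ∪ {(c_k,c_j)}. If there exists a candidate c with P'(c_k,c) and P'(c,c_j), i.e. the open segment (c_k, P', c_j) is nonempty, then P' ∉ μ(P_i). -/
import Mathlib


/-- A preference order: a strict total order on candidates. -/
def IsPref {C : Type*} (P : C → C → Prop) : Prop :=
  (∀ a b : C, a ≠ b → P a b ∨ P b a) ∧ (∀ a : C, ¬ P a a) ∧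
    ∀ a b c : C, P a b → P b c → P a c

/-- The (closed) segment `[c, P, c']` of candidates between `c` and `c'`. -/
def seg {C : Type*} (P : C → C → Prop) (c c' : C) : Set C :=
  {d : C | (d = c ∨ P c d) ∧ (d = c' ∨ P d c')}

/-- `Q` is a strict partial order (consistent, transitively closed reported preferences). -/
def IsSPO {C : Type*} (Q : C → C → Prop) : Prop :=
  (∀ a : C, ¬ Q a a) ∧ ∀ a b c : C, Q a b → Q b c → Q a c

/-- `P` is consistent with (extends) the reported preferences `Q`, written `P ⊨ Q`. -/
def Extends {C : Type*} (P Q : C → C → Prop) : Prop := ∀ a b : C, Q a b → P a b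

/-- The swap distance between two preference orders: the number of (unordered) pairs of
candidates ordered differently, counted here as ordered pairs `(a, b)` with
`P a b` and `P' b a`. -/
noncomputable def dswap {C : Type*} [Fintype C] (P P' : C → C → Prop) : ℕ :=
  Set.ncard {p : C × C | P p.1 p.2 ∧ P' p.2 p.1}

/-- `P` is a preference order consistent with the transitive closure of `Q ∪ {(ck, cj)}`
(for a transitive total order this is the same as extending `Q` and putting `ck` above `cj`). -/
def Feasible {C : Type*} (Q : C → C → Prop) (cj ck : C) (P : C → C → Prop) : Prop :=
  IsPref P ∧ Extends P Q ∧ P ck cj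

/-- `P ∈ μ(Pi)`: among all preference orders consistent with the transitive closure of
`Q ∪ {(ck, cj)}`, `P` minimizes the swap distance to `Pi`. -/
def InMu {C : Type*} [Fintype C] (Q : C → C → Prop) (cj ck : C)
    (Pi P : C → C → Prop) : Prop :=
  Feasible Q cj ck P ∧ ∀ R : C → C → Prop, Feasible Q cj ck R → dswap Pi P ≤ dswap Pi R

lemma pref_asymm {C : Type*} {P : C → C → Prop} (h : IsPref P) {a b : C}
    (hab : P a b) : ¬ P b a := fun hba => h.2.1 a (h.2.2 a b a hab hba)

theorem statement7 {C : Type*} [Fintype C]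
    (Q : C → C → Prop) (hQ : IsSPO Q)
    (Pi : C → C → Prop) (hPi : IsPref Pi) (hPiQ : Extends Pi Q)
    (cj ck : C) (hjk : Pi cj ck) (hQjk : ¬ Q cj ck) (hQkj : ¬ Q ck cj)
    (P' : C → C → Prop) (hfeas : Feasible Q cj ck P')
    (hbetween : ∃ c : C, P' ck c ∧ P' c cj) :
    ¬ InMu Q cj ck Pi P' := by
  classical
  obtain ⟨hP', hP'Q, hP'kj⟩ := hfeas
  obtain ⟨c, hkc, hcj⟩ := hbetween
  intro hmu
  -- the set of "reversed pairs" within the closed segment, other than (ck,cj)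
  set G : Set (C × C) := {p : C × C | P' p.1 p.2 ∧ Pi p.2 p.1 ∧
      (p.1 = ck ∨ P' ck p.1) ∧ (p.2 = cj ∨ P' p.2 cj) ∧ p ≠ (ck, cj)} with hG
  have hckj : c ≠ cj := fun h => hP'.2.1 cj (h ▸ hcj)
  have hckk : c ≠ ck := fun h => hP'.2.1 ck (h ▸ hkc)
  have hGne : G.Nonempty := by
    rcases hPi.1 c cj hckj with h | h
    · exact ⟨(ck, c), hkc, hPi.2.2 c cj ck h hjk, Or.inl rfl, Or.inr hcj,
        fun he => hckj (congrArg Prod.snd he)⟩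
    · exact ⟨(c, cj), hcj, h, Or.inr hkc, Or.inl rfl,
        fun he => hckk (congrArg Prod.fst he)⟩
  obtain ⟨⟨x, y⟩, hxyG, hmin⟩ := Set.exists_min_image G
    (fun p => (seg P' p.1 p.2).ncard) (Set.toFinite G) hGne
  obtain ⟨hxy, hyx, hckx, hycj, hne⟩ := hxyG
  -- adjacency of x, y in P'
  have hadj : ∀ z, ¬ (P' x z ∧ P' z y) := by
    rintro z ⟨hxz, hzy⟩
    have hckz : P' ck z := by
      rcases hckx with h | h
      · exact h ▸ hxz
      · exact hP'.2.2 ck x z h hxz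
    have hzcj : P' z cj := by
      rcases hycj with h | h
      · exact h ▸ hzy
      · exact hP'.2.2 z y cj hzy h
    have hzck : z ≠ ck := fun h => hP'.2.1 ck (h ▸ hckz)
    have hzcj' : z ≠ cj := fun h => hP'.2.1 cj (h ▸ hzcj)
    have hxz' : x ≠ z := fun h => hP'.2.1 x (h ▸ hxz)
    rcases hPi.1 x z hxz' with h | h
    · -- Pi x z, so Pi y z (from Pi y x, Pi x z), reversed pair (z, y)
      have hGzy : (z, y) ∈ G := ⟨hzy, hPi.2.2 y x z hyx h, Or.inr hckz, hycj,
        fun he => hzck (congrArg Prod.fst he)⟩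
      have hlt : (seg P' z y).ncard < (seg P' x y).ncard := by
        apply Set.ncard_lt_ncard _ (Set.toFinite _)
        constructor
        · rintro d ⟨hd1, hd2⟩
          refine ⟨Or.inr ?_, hd2⟩
          rcases hd1 with h' | h'
          · exact h' ▸ hxz
          · exact hP'.2.2 x z d hxz h'
        · intro hsub
          have : x ∈ seg P' z y := hsub ⟨Or.inl rfl, Or.inr hxy⟩
          rcases this.1 with h' | h'
          · exact hxz' h'
          · exact pref_asymm hP' hxz h'
      exact absurd (hmin (z, y) hGzy) (by simpa using Nat.not_le.mpr hlt)
    · -- Pi z x, reversed pair (x, z)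
      have hGxz : (x, z) ∈ G := ⟨hxz, h, hckx, Or.inr hzcj,
        fun he => hzcj' (congrArg Prod.snd he)⟩
      have hlt : (seg P' x z).ncard < (seg P' x y).ncard := by
        apply Set.ncard_lt_ncard _ (Set.toFinite _)
        constructor
        · rintro d ⟨hd1, hd2⟩
          refine ⟨hd1, Or.inr ?_⟩
          rcases hd2 with h' | h'
          · exact h' ▸ hzy
          · exact hP'.2.2 d z y h' hzy
        · intro hsub
          have : y ∈ seg P' x z := hsub ⟨Or.inr hxy, Or.inl rfl⟩
          rcases this.2 with h' | h'
          · exact hP'.2.1 z (h' ▸ hzy)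
          · exact pref_asymm hP' hzy h'
      exact absurd (hmin (x, z) hGxz) (by simpa using Nat.not_le.mpr hlt)
  have hxney : x ≠ y := fun h => hP'.2.1 y (h ▸ hxy)
  -- neighbor characterization
  have hleft : ∀ a, a ≠ x → a ≠ y → (P' a x ↔ P' a y) := by
    intro a hax hay
    constructor
    · exact fun h => hP'.2.2 a x y h hxy
    · intro h
      by_contra hax'
      rcases hP'.1 x a (fun he => hax he.symm) with h' | h'
      · exact hadj a ⟨h', h⟩
      · exact hax' h'
  have hright : ∀ a, a ≠ x → a ≠ y → (P' x a ↔ P' y a) := by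
    intro a hax hay
    constructor
    · intro h
      by_contra hya
      rcases hP'.1 a y hay with h' | h'
      · exact hadj a ⟨h, h'⟩
      · exact hya h'
    · exact fun h => hP'.2.2 x y a hxy h
  -- the swapped order
  set σ : C → C := fun a => if a = x then y else if a = y then x else a with hσ
  set R : C → C → Prop := fun a b => P' (σ a) (σ b) with hR
  have hσinv : ∀ a, σ (σ a) = a := by
    intro a
    simp only [hσ]
    by_cases h1 : a = x
    · simp [h1, hxney.symm, hxney]
    · by_cases h2 : a = y
      · simp [h1, h2, hxney]
      · simp [h1, h2]
  have hσinj : Function.Injective σ := Function.LeftInverse.injective hσinv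
  have hRpref : IsPref R := by
    refine ⟨fun a b hab => hP'.1 (σ a) (σ b) (fun h => hab (hσinj h)),
      fun a => hP'.2.1 (σ a), fun a b c h1 h2 => hP'.2.2 _ _ _ h1 h2⟩
  -- R agrees with P' off the swapped pair
  have hfalse : ∀ u : C, ¬ P' u u := hP'.2.1
  have hyx' : y ≠ x := Ne.symm hxney
  have hRchar : ∀ a b : C, (a, b) ≠ (x, y) → (a, b) ≠ (y, x) → (R a b ↔ P' a b) := by
    intro a b h1 h2
    by_cases hax : a = x
    · by_cases hby : b = y
      · exact absurd (by rw [hax, hby]) h1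
      · by_cases hbx : b = x
        · rw [hax, hbx]
          simp only [hR, hσ, if_pos rfl]
          exact iff_of_false (hfalse y) (hfalse x)
        · rw [hax]
          simp only [hR, hσ, if_pos rfl, if_neg hbx, if_neg hby]
          exact (hright b hbx hby).symm
    · by_cases hay : a = y
      · by_cases hbx : b = x
        · exact absurd (by rw [hay, hbx]) h2
        · by_cases hby : b = y
          · rw [hay, hby]
            simp only [hR, hσ, if_neg hyx', if_pos rfl]
            exact iff_of_false (hfalse x) (hfalse y)
          · rw [hay]
            simp only [hR, hσ, if_neg hyx', if_pos rfl, if_neg hbx, if_neg hby]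
            exact hright b hbx hby
      · simp only [hR, hσ, if_neg hax, if_neg hay]
        by_cases hbx : b = x
        · rw [hbx]
          simp only [if_pos rfl]
          exact (hleft a hax hay).symm
        · by_cases hby : b = y
          · rw [hby]
            simp only [if_neg hyx', if_neg hbx, if_pos rfl]
            exact hleft a hax hay
          · simp only [if_neg hbx, if_neg hby]
  have hRyx : R y x := by
    simp only [hR, hσ, if_pos rfl, if_neg hxney.symm]
    exact hxy
  -- feasibility of R
  have hRfeas : Feasible Q cj ck R := by
    refine ⟨hRpref, ?_, ?_⟩
    · intro a b hab
      by_cases h1 : (a, b) = (x, y)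
      · rw [Prod.mk.injEq] at h1
        obtain ⟨e1, e2⟩ := h1
        subst e1; subst e2
        exact absurd (hPiQ a b hab) (pref_asymm hPi hyx)
      · by_cases h2 : (a, b) = (y, x)
        · rw [Prod.mk.injEq] at h2
          obtain ⟨e1, e2⟩ := h2
          subst e1; subst e2
          exact hRyx
        · exact (hRchar a b h1 h2).mpr (hP'Q a b hab)
    · have h1 : (ck, cj) ≠ (x, y) := fun h => hne h.symm
      have h2 : (ck, cj) ≠ (y, x) := by
        intro h
        injection h with e1 e2
        exact pref_asymm hP' hxy (e1 ▸ e2 ▸ hP'kj)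
      exact (hRchar ck cj h1 h2).mpr hP'kj
  -- strict distance decrease
  have hset : {p : C × C | Pi p.1 p.2 ∧ R p.2 p.1}
      = {p : C × C | Pi p.1 p.2 ∧ P' p.2 p.1} \ {(y, x)} := by
    ext ⟨a, b⟩
    simp only [Set.mem_setOf_eq, Set.mem_diff, Set.mem_singleton_iff]
    constructor
    · rintro ⟨hab, hba⟩
      have h2 : (a, b) ≠ (y, x) := by
        intro h
        rw [Prod.mk.injEq] at h
        rw [h.2, h.1] at hba
        have hRxy : ¬ R x y := by
          intro hh
          simp only [hR, hσ, if_pos rfl, if_neg hyx'] at hh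
          exact pref_asymm hP' hxy hh
        exact hRxy hba
      have hba1 : (b, a) ≠ (x, y) := fun h => h2 (by injection h with e1 e2; rw [e1, e2])
      have hba2 : (b, a) ≠ (y, x) := by
        intro h
        rw [Prod.mk.injEq] at h
        rw [h.2, h.1] at hab
        exact pref_asymm hPi hyx hab
      exact ⟨⟨hab, (hRchar b a hba1 hba2).mp hba⟩, h2⟩
    · rintro ⟨⟨hab, hba⟩, h2⟩
      have hba1 : (b, a) ≠ (x, y) := fun h => h2 (by injection h with e1 e2; rw [e1, e2])
      have hba2 : (b, a) ≠ (y, x) := by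
        intro h
        rw [Prod.mk.injEq] at h
        rw [h.2, h.1] at hab
        exact pref_asymm hPi hyx hab
      exact ⟨hab, (hRchar b a hba1 hba2).mpr hba⟩
  have hmem : (y, x) ∈ {p : C × C | Pi p.1 p.2 ∧ P' p.2 p.1} := ⟨hyx, hxy⟩
  have hlt : dswap Pi R < dswap Pi P' := by
    rw [dswap, dswap, hset]
    exact Set.ncard_diff_singleton_lt_of_mem hmem (Set.toFinite _)
  exact absurd (hmu.2 R hRfeas) (Nat.not_le.mpr hlt)
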